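/- Let k ≥ 2 be an integer and define c̃_k(x) := (1−x)^{4−2/k} x (1+2(k−1)x) + x^{4−2/k} (1−x)(1+2(k−1)(1−x)) − (1−x)^{2−1/k} x^{2−1/k} (2k−1 − 4(k−1)(1−x)x) for x ∈ (0,1). Then c̃_k(x) > 0 for every x ∈ (0, 1/2). Equivalently, for every real z > 1 one has (z−1)(z^{2k−1}−1) · ∑_{i=1}^{k−1} (z^i + z^{−i} − 2) > 0. -/

import Mathlib

/-- Key polynomial inequality: for `s > 1`,
`s^(2m+3) + (2m+3) s^(m+1) - (2m+3) s^(m+2) - 1 > 0`. -/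
lemma ck_tilde_key_poly (m : ℕ) (s : ℝ) (hs : 1 < s) :
    0 < s^(2*m+3) + (2*(m:ℝ)+3)*s^(m+1) - (2*(m:ℝ)+3)*s^(m+2) - 1 := by
  have hs0 : (0:ℝ) < s := by linarith
  have hG : (∑ j ∈ Finset.range (2*m+3), s^j) * (s - 1) = s^(2*m+3) - 1 :=
    geom_sum_mul s (2*m+3)
  have hpair : ∀ j ∈ Finset.range (2*m+3), 2*s^(m+1) ≤ s^j + s^(2*m+2-j) := by
    intro j hj
    rw [Finset.mem_range] at hj
    have hmul : s^j * s^(2*m+2-j) = (s^(m+1))^2 := by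
      rw [← pow_add, ← pow_mul]; congr 1; omega
    nlinarith [sq_nonneg (s^j - s^(2*m+2-j)), pow_pos hs0 j, pow_pos hs0 (2*m+2-j),
      pow_pos hs0 (m+1)]
  have hstrict : 2*s^(m+1) < s^0 + s^(2*m+2-0) := by
    have h1 : 1 < s^(m+1) := one_lt_pow₀ hs (by omega)
    have h2 : s^(2*m+2-0) = (s^(m+1))^2 := by rw [← pow_mul]; congr 1; omega
    rw [h2]; nlinarith
  have hsum : (((2*m+3:ℕ)):ℝ) * (2*s^(m+1)) < ∑ j ∈ Finset.range (2*m+3), (s^j + s^(2*m+2-j)) := by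
    have := Finset.sum_lt_sum (f := fun j => 2*s^(m+1)) (g := fun j => s^j + s^(2*m+2-j))
      hpair ⟨0, Finset.mem_range.2 (by omega), hstrict⟩
    simpa [Finset.sum_const, Finset.card_range, mul_comm] using this
  have hrefl : ∑ j ∈ Finset.range (2*m+3), s^(2*m+2-j) = ∑ j ∈ Finset.range (2*m+3), s^j := by
    have := Finset.sum_range_reflect (fun j => s^j) (2*m+3)
    simpa using this
  have hG2 : ((2*m+3:ℕ):ℝ)*s^(m+1) < ∑ j ∈ Finset.range (2*m+3), s^j := by
    have he : ∑ j ∈ Finset.range (2*m+3), (s^j + s^(2*m+2-j))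
        = 2*∑ j ∈ Finset.range (2*m+3), s^j := by
      rw [Finset.sum_add_distrib, hrefl]; ring
    rw [he] at hsum; linarith
  have h1s : 0 < s - 1 := by linarith
  have hprod : 0 < ((∑ j ∈ Finset.range (2*m+3), s^j) - ((2*m+3:ℕ):ℝ)*s^(m+1)) * (s-1) :=
    mul_pos (by linarith) h1s
  have keyeq : s^(2*m+3) + (2*(m:ℝ)+3)*s^(m+1) - (2*(m:ℝ)+3)*s^(m+2) - 1
      = ((∑ j ∈ Finset.range (2*m+3), s^j) - ((2*m+3:ℕ):ℝ)*s^(m+1)) * (s-1) := by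
    push_cast
    linear_combination -hG
  rw [keyeq]; exact hprod

/-- For integer `k ≥ 2`, the coefficient function
`c̃_k(x) = (1−x)^{4−2/k} x (1+2(k−1)x) + x^{4−2/k} (1−x)(1+2(k−1)(1−x))
− (1−x)^{2−1/k} x^{2−1/k} (2k−1 − 4(k−1)(1−x)x)` is positive on `(0, 1/2)`;
equivalently, for every real `z > 1`,
`(z−1)(z^{2k−1}−1) ∑_{i=1}^{k−1} (z^i + z^{−i} − 2) > 0`. -/
theorem ck_tilde_positive (k : ℕ) (hk : 2 ≤ k) :
    (∀ x ∈ Set.Ioo (0 : ℝ) (1 / 2),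
      (1 - x) ^ (4 - 2 / (k : ℝ)) * x * (1 + 2 * ((k : ℝ) - 1) * x) +
        x ^ (4 - 2 / (k : ℝ)) * (1 - x) * (1 + 2 * ((k : ℝ) - 1) * (1 - x)) -
        (1 - x) ^ (2 - 1 / (k : ℝ)) * x ^ (2 - 1 / (k : ℝ)) *
          (2 * (k : ℝ) - 1 - 4 * ((k : ℝ) - 1) * (1 - x) * x) > 0) ∧
    (∀ z : ℝ, 1 < z →
      (z - 1) * (z ^ (2 * k - 1) - 1) *
        ∑ i ∈ Finset.Icc 1 (k - 1), (z ^ i + z ^ (-(i : ℤ)) - 2) > 0) := by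
  constructor
  · -- first part
    obtain ⟨m, rfl⟩ : ∃ m, k = m + 2 := ⟨k - 2, by omega⟩
    rintro x ⟨hx0, hx2⟩
    have h1x : (0:ℝ) < 1 - x := by linarith
    have hxlt : x < 1 - x := by linarith
    set K : ℝ := ((m+2 : ℕ) : ℝ) with hK
    have hKm : K = (m:ℝ) + 2 := by rw [hK]; push_cast; ring
    have hm0 : (0:ℝ) ≤ (m:ℝ) := Nat.cast_nonneg m
    have hKpos : (0:ℝ) < K := by rw [hKm]; linarith
    have hK0 : K ≠ 0 := ne_of_gt hKpos
    set e : ℝ := 2 - 1/K with he_def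
    have he : 0 < e := by
      have : 1/K ≤ 1/2 := by
        apply one_div_le_one_div_of_le (by norm_num)
        rw [hKm]; linarith
      rw [he_def]; linarith
    have h4a : (1-x) ^ ((4:ℝ) - 2/K) = (1-x)^e * (1-x)^e := by
      rw [← Real.rpow_add h1x]; congr 1; rw [he_def]; ring
    have h4b : x ^ ((4:ℝ) - 2/K) = x^e * x^e := by
      rw [← Real.rpow_add hx0]; congr 1; rw [he_def]; ring
    rw [h4a, h4b]
    set u : ℝ := (1-x)^e with hu_def
    set v : ℝ := x^e with hv_def
    have hu : 0 < u := Real.rpow_pos_of_pos h1x e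
    have hv : 0 < v := Real.rpow_pos_of_pos hx0 e
    have huv : v < u := Real.rpow_lt_rpow hx0.le hxlt he
    set r : ℝ := (1-x)/x with hr_def
    have hr0 : (0:ℝ) < r := by positivity
    have hr : 1 < r := (one_lt_div hx0).2 hxlt
    set s : ℝ := r ^ (1/K) with hs_def
    have hs : 1 < s := by
      rw [hs_def, Real.one_lt_rpow_iff_of_pos hr0]
      left; exact ⟨hr, by positivity⟩
    have hs0 : (0:ℝ) < s := by linarith
    have hsk : s ^ (m+2) = r := by
      rw [hs_def, ← Real.rpow_natCast (r ^ (1/K)) (m+2), ← Real.rpow_mul hr0.le, ← hK,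
        one_div, inv_mul_cancel₀ hK0, Real.rpow_one]
    have hse : r ^ e = s ^ (2*m+3) := by
      rw [hs_def, ← Real.rpow_natCast (r ^ (1/K)) (2*m+3), ← Real.rpow_mul hr0.le]
      congr 1
      rw [he_def, hKm]
      push_cast
      have h0 : (m:ℝ)+2 ≠ 0 := by positivity
      field_simp
      ring
    have h1xr : 1 - x = r * x := by rw [hr_def, div_mul_cancel₀ _ (ne_of_gt hx0)]
    have hueq : u = s^(2*m+3) * v := by
      rw [hu_def, h1xr, Real.mul_rpow hr0.le hx0.le, hse, hv_def]
    have hx1eq : 1 - x = s^(m+2) * x := by rw [hsk]; exact h1xr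
    have hxe : x = 1/(1 + s^(m+2)) := by
      have hPpos : (0:ℝ) < 1 + s^(m+2) := by positivity
      rw [eq_div_iff (ne_of_gt hPpos)]
      linear_combination -hx1eq
    have hf := ck_tilde_key_poly m s hs
    have hD : 0 < x*(1+2*(K-1)*x)*s^(2*m+3) - (1-x)*(1+2*(K-1)*(1-x)) := by
      have hident : x*(1+2*(K-1)*x)*s^(2*m+3) - (1-x)*(1+2*(K-1)*(1-x))
          = x^2 * s^(m+2) * (s^(2*m+3) + (2*(m:ℝ)+3)*s^(m+1) - (2*(m:ℝ)+3)*s^(m+2) - 1) := by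
        rw [hKm, hxe]
        have hP : (1:ℝ) + s^(m+2) ≠ 0 := by positivity
        field_simp
        ring
      rw [hident]
      exact mul_pos (mul_pos (pow_pos hx0 2) (pow_pos hs0 (m+2))) hf
    have hsecond : 0 < x*(1+2*(K-1)*x)*u - (1-x)*(1+2*(K-1)*(1-x))*v := by
      have heq2 : x*(1+2*(K-1)*x)*u - (1-x)*(1+2*(K-1)*(1-x))*v
          = (x*(1+2*(K-1)*x)*s^(2*m+3) - (1-x)*(1+2*(K-1)*(1-x))) * v := by
        rw [hueq]; ring
      rw [heq2]
      exact mul_pos hD hv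
    have hmain : 0 < (u - v) * (x*(1+2*(K-1)*x)*u - (1-x)*(1+2*(K-1)*(1-x))*v) :=
      mul_pos (by linarith) hsecond
    exact hmain.trans_eq (by ring)
  · -- second part
    intro z hz
    have hz0 : (0:ℝ) < z := by linarith
    have h1 : (0:ℝ) < z - 1 := by linarith
    have h2 : (0:ℝ) < z^(2*k-1) - 1 := by
      have : 1 < z^(2*k-1) := one_lt_pow₀ hz (by omega)
      linarith
    have h3 : 0 < ∑ i ∈ Finset.Icc 1 (k-1), (z^i + z^(-(i:ℤ)) - 2) := by
      apply Finset.sum_pos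
      · intro i hi
        rw [Finset.mem_Icc] at hi
        have hzi : 1 < z^i := one_lt_pow₀ hz (by omega)
        have hzpos : (0:ℝ) < z^i := by positivity
        have hneg : z^(-(i:ℤ)) = (z^i)⁻¹ := by rw [zpow_neg, zpow_natCast]
        rw [hneg]
        have heq : z^i + (z^i)⁻¹ - 2 = (z^i - 1)^2 * (z^i)⁻¹ := by
          field_simp
          ring
        rw [heq]
        exact mul_pos (pow_pos (by linarith) 2) (inv_pos.2 hzpos)
      · exact ⟨1, Finset.mem_Icc.2 ⟨le_refl 1, by omega⟩⟩
    positivity
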